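/- Let V be a vector space over ℂ with ℤ-indexed bilinear products aₙb satisfying truncation and weak associativity (component forms), let λ ∈ ℂ, and let P : V → V be an ordinary Rota-Baxter operator of weight λ. Define a ≺ₙ b := aₙ(Pb) + λ·aₙb and a ≻ₙ b := (Pa)ₙb for n ∈ ℤ. Then (V,≺,≻) is a dendriform field algebra in component form: for all a,b,c ∈ V there exists N ∈ ℕ (depending only on a and c) such that the N-associativity identities hold at (a,b,c) simultaneously for (α,β;γ,δ) equal to (≺,≺;≺,≺+≻), to (≻,≺;≻,≺), and to (≺+≻,≻;≻,≻), where (≺+≻)ₙ(x,y) := x ≺ₙ y + x ≻ₙ y. -/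

import Mathlib

section Defs

variable {W : Type*} [AddCommGroup W] [Module ℂ W]

/-- Truncation: for all `a, b` the products `aₙb` vanish for `n` large. -/
def Truncation (μ : ℤ → W → W → W) : Prop :=
  ∀ a b : W, ∃ N : ℤ, ∀ n ≥ N, μ n a b = 0

/-- The generalized binomial coefficient `B(x,j) = x(x−1)⋯(x−j+1)/j!`. -/
noncomputable def genBinom (x : ℂ) (j : ℕ) : ℂ :=
  (∏ i ∈ Finset.range j, (x - (i : ℂ))) / (j.factorial : ℂ)

/-- The `N`-associativity identity for `(α,β;γ,δ)` at `(a,b,c)`: the coefficient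
form of `(z₀+z₂)^N β(α(a,z₀)b,z₂)c = (z₀+z₂)^N γ(a,z₀+z₂)δ(b,z₂)c`, where the
right-hand sum over `m ∈ ℤ, m ≤ N+p` is reindexed by `m ↦ N+p−m` with `m ∈ ℕ`. -/
def NAssocId (α β γ δ : ℤ → W → W → W) (N : ℕ) (a b c : W) : Prop :=
  ∀ p q : ℤ,
    ∑ i ∈ Finset.range (N + 1),
        (N.choose i : ℂ) • β (q + (N : ℤ) - (i : ℤ)) (α (p + (i : ℤ)) a b) c
      = ∑ᶠ m : ℕ,
        genBinom ((m : ℂ) - (p : ℂ) - 1) m • γ ((N : ℤ) + p - (m : ℤ)) a (δ (q + (m : ℤ)) b c)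

/-- Weak associativity in component form. -/
def WeakAssoc (μ : ℤ → W → W → W) : Prop :=
  ∀ a c : W, ∃ N : ℕ, ∀ b : W, NAssocId μ μ μ μ N a b c

end Defs

/-- An ordinary Rota-Baxter operator of weight `lam` on the ℤ-indexed products `μ`. -/
def OrdRBO {V : Type*} [AddCommGroup V] [Module ℂ V]
    (μ : ℤ → V →ₗ[ℂ] V →ₗ[ℂ] V) (P : V →ₗ[ℂ] V) (lam : ℂ) : Prop :=
  ∀ (n : ℤ) (a b : V),
    μ n (P a) (P b) = P (μ n (P a) b) + P (μ n a (P b)) + lam • P (μ n a b)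


section Aux


lemma genBinom_zero (x : ℂ) : genBinom x 0 = 1 := by simp [genBinom]

lemma genBinom_pascal (x : ℂ) (k : ℕ) :
    genBinom x (k+1) = genBinom (x-1) (k+1) + genBinom (x-1) k := by
  have hA : ∏ i ∈ Finset.range (k+1), (x - (i:ℂ)) = (∏ i ∈ Finset.range k, (x - 1 - (i:ℂ))) * x := by
    rw [Finset.prod_range_succ']
    congr 1
    · exact Finset.prod_congr rfl fun i _ => by push_cast; ring
    · simp
  have hB : ∏ i ∈ Finset.range (k+1), (x - 1 - (i:ℂ))
      = (∏ i ∈ Finset.range k, (x - 1 - (i:ℂ))) * (x - 1 - k) := Finset.prod_range_succ _ _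
  have h1 : (((k+1).factorial : ℕ) : ℂ) ≠ 0 := by exact_mod_cast Nat.factorial_ne_zero _
  have h2 : ((k.factorial : ℕ) : ℂ) ≠ 0 := by exact_mod_cast Nat.factorial_ne_zero _
  have h3 : ((k:ℂ)+1) ≠ 0 := Nat.cast_add_one_ne_zero k
  simp only [genBinom, hA, hB, Nat.factorial_succ]
  push_cast
  field_simp
  ring

lemma finsum_range {W : Type*} [AddCommMonoid W] (f : ℕ → W) (M : ℕ)
    (h : ∀ m, M ≤ m → f m = 0) : ∑ᶠ m, f m = ∑ m ∈ Finset.range M, f m := by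
  apply finsum_eq_finset_sum_of_support_subset
  intro m hm
  simp only [Finset.coe_range, Set.mem_Iio]
  by_contra hc
  exact hm (h m (le_of_not_gt hc))

section V
variable {V : Type*} [AddCommGroup V] [Module ℂ V]

lemma sum_split2 {ι : Type*} (s : Finset ι) (co : ι → ℂ) (lam : ℂ) (f g : ι → V) :
    ∑ i ∈ s, co i • (f i + lam • g i)
      = (∑ i ∈ s, co i • f i) + lam • ∑ i ∈ s, co i • g i := by
  rw [Finset.smul_sum, ← Finset.sum_add_distrib]
  exact Finset.sum_congr rfl fun i _ => by rw [smul_add, smul_comm]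

lemma sum_split4 {ι : Type*} (s : Finset ι) (co : ι → ℂ) (lam : ℂ) (f g h k : ι → V) :
    ∑ i ∈ s, co i • (f i + lam • g i + lam • h i + lam • lam • k i)
      = (∑ i ∈ s, co i • f i) + lam • (∑ i ∈ s, co i • g i)
        + lam • (∑ i ∈ s, co i • h i) + lam • lam • ∑ i ∈ s, co i • k i := by
  simp only [Finset.smul_sum, ← Finset.sum_add_distrib]
  refine Finset.sum_congr rfl fun i _ => ?_
  module

end V



section V
variable {V : Type*} [AddCommGroup V] [Module ℂ V]

lemma pascal_sum (g : ℤ → ℤ → V) (N : ℕ) (p q : ℤ) :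
    ∑ i ∈ Finset.range (N + 1 + 1), (((N+1).choose i : ℕ) : ℂ) • g (p + (i:ℤ)) (q + ((N+1:ℕ):ℤ) - (i:ℤ))
      = ∑ i ∈ Finset.range (N + 1), ((N.choose i : ℕ) : ℂ) • g ((p+1) + (i:ℤ)) (q + (N:ℤ) - (i:ℤ))
        + ∑ i ∈ Finset.range (N + 1), ((N.choose i : ℕ) : ℂ) • g (p + (i:ℤ)) ((q+1) + (N:ℤ) - (i:ℤ)) := by
  rw [Finset.sum_range_succ']
  have step1 : ∀ i ∈ Finset.range (N+1),
      (((N+1).choose (i+1) : ℕ) : ℂ) • g (p + ((i+1:ℕ):ℤ)) (q + ((N+1:ℕ):ℤ) - ((i+1:ℕ):ℤ))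
        = ((N.choose i : ℕ) : ℂ) • g ((p+1) + (i:ℤ)) (q + (N:ℤ) - (i:ℤ))
          + ((N.choose (i+1) : ℕ) : ℂ) • g ((p+1) + (i:ℤ)) (q + (N:ℤ) - (i:ℤ)) := by
    intro i _
    have e1 : p + (((i:ℕ)+1 : ℕ) : ℤ) = (p+1) + (i:ℤ) := by push_cast; ring
    have e2 : q + ((N+1:ℕ):ℤ) - (((i:ℕ)+1:ℕ):ℤ) = q + (N:ℤ) - (i:ℤ) := by push_cast; ring
    rw [e1, e2]
    simp only [Nat.choose_succ_succ, Nat.succ_eq_add_one, Nat.cast_add, add_smul]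
  rw [Finset.sum_congr rfl step1, Finset.sum_add_distrib]
  have last : (((N+1).choose 0 : ℕ) : ℂ) • g (p + ((0:ℕ):ℤ)) (q + ((N+1:ℕ):ℤ) - ((0:ℕ):ℤ))
      = g p (q + (N:ℤ) + 1) := by
    have e1 : p + ((0:ℕ):ℤ) = p := by push_cast; ring
    have e2 : q + ((N+1:ℕ):ℤ) - ((0:ℕ):ℤ) = q + (N:ℤ) + 1 := by push_cast; ring
    rw [e1, e2]; simp
  rw [last]
  have key : ∑ i ∈ Finset.range (N + 1), ((N.choose i : ℕ) : ℂ) • g (p + (i:ℤ)) ((q+1) + (N:ℤ) - (i:ℤ))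
      = (∑ i ∈ Finset.range (N+1), ((N.choose (i+1) : ℕ) : ℂ) • g ((p+1) + (i:ℤ)) (q + (N:ℤ) - (i:ℤ)))
        + g p (q + (N:ℤ) + 1) := by
    have hz : ∑ i ∈ Finset.range (N + 1), ((N.choose i : ℕ) : ℂ) • g (p + (i:ℤ)) ((q+1) + (N:ℤ) - (i:ℤ))
        = ∑ i ∈ Finset.range (N + 1 + 1), ((N.choose i : ℕ) : ℂ) • g (p + (i:ℤ)) ((q+1) + (N:ℤ) - (i:ℤ)) := by
      conv_rhs => rw [Finset.sum_range_succ]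
      simp [Nat.choose_succ_self]
    rw [hz, Finset.sum_range_succ']
    congr 1
    · refine Finset.sum_congr rfl fun i _ => ?_
      have e1 : p + (((i:ℕ)+1:ℕ):ℤ) = (p+1) + (i:ℤ) := by push_cast; ring
      have e2 : (q+1) + (N:ℤ) - (((i:ℕ)+1:ℕ):ℤ) = q + (N:ℤ) - (i:ℤ) := by push_cast; ring
      rw [e1, e2]
    · have e1 : p + ((0:ℕ):ℤ) = p := by push_cast; ring
      have e2 : (q+1) + (N:ℤ) - ((0:ℕ):ℤ) = q + (N:ℤ) + 1 := by push_cast; ring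
      rw [e1, e2]; simp
  rw [key]
  abel

lemma pascal_rhs (w : ℤ → ℤ → V) (N : ℕ) (p q : ℤ) (M : ℕ)
    (hw : ∀ (k : ℤ), w k (q + (M:ℤ)) = 0) :
    ∑ m ∈ Finset.range M, genBinom ((m:ℂ) - ((p+1:ℤ):ℂ) - 1) m • w ((N:ℤ) + (p+1) - (m:ℤ)) (q + (m:ℤ))
      + ∑ m ∈ Finset.range M, genBinom ((m:ℂ) - (p:ℂ) - 1) m • w ((N:ℤ) + p - (m:ℤ)) ((q+1) + (m:ℤ))
      = ∑ m ∈ Finset.range (M+1), genBinom ((m:ℂ) - (p:ℂ) - 1) m • w (((N+1:ℕ):ℤ) + p - (m:ℤ)) (q + (m:ℤ)) := by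
  conv_rhs => rw [Finset.sum_range_succ']
  have step : ∀ m ∈ Finset.range M,
      genBinom (((m+1:ℕ):ℂ) - (p:ℂ) - 1) (m+1) • w (((N+1:ℕ):ℤ) + p - ((m+1:ℕ):ℤ)) (q + ((m+1:ℕ):ℤ))
        = genBinom ((m:ℂ) - (p:ℂ) - 1) (m+1) • w ((N:ℤ) + p - (m:ℤ)) ((q+1) + (m:ℤ))
          + genBinom ((m:ℂ) - (p:ℂ) - 1) m • w ((N:ℤ) + p - (m:ℤ)) ((q+1) + (m:ℤ)) := by
    intro m _
    have e1 : ((N+1:ℕ):ℤ) + p - (((m:ℕ)+1:ℕ):ℤ) = (N:ℤ) + p - (m:ℤ) := by push_cast; ring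
    have e2 : q + (((m:ℕ)+1:ℕ):ℤ) = (q+1) + (m:ℤ) := by push_cast; ring
    have e3 : (((m:ℕ)+1:ℕ):ℂ) - (p:ℂ) - 1 = ((m:ℂ) - (p:ℂ) - 1) + 1 := by push_cast; ring
    have e4 : ((m:ℂ) - (p:ℂ) - 1) + 1 - 1 = (m:ℂ) - (p:ℂ) - 1 := by ring
    rw [e1, e2, e3, genBinom_pascal, e4, add_smul]
  rw [Finset.sum_congr rfl step, Finset.sum_add_distrib]
  have h1 : ∑ m ∈ Finset.range M, genBinom ((m:ℂ) - ((p+1:ℤ):ℂ) - 1) m • w ((N:ℤ) + (p+1) - (m:ℤ)) (q + (m:ℤ))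
      = (∑ m ∈ Finset.range M, genBinom ((m:ℂ) - (p:ℂ) - 1) (m+1) • w ((N:ℤ) + p - (m:ℤ)) ((q+1) + (m:ℤ)))
        + genBinom (((0:ℕ):ℂ) - (p:ℂ) - 1) 0 • w (((N+1:ℕ):ℤ) + p - ((0:ℕ):ℤ)) (q + ((0:ℕ):ℤ)) := by
    have hpad : ∑ m ∈ Finset.range M, genBinom ((m:ℂ) - ((p+1:ℤ):ℂ) - 1) m • w ((N:ℤ) + (p+1) - (m:ℤ)) (q + (m:ℤ))
        = ∑ m ∈ Finset.range (M+1), genBinom ((m:ℂ) - ((p+1:ℤ):ℂ) - 1) m • w ((N:ℤ) + (p+1) - (m:ℤ)) (q + (m:ℤ)) := by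
      conv_rhs => rw [Finset.sum_range_succ]
      rw [hw]
      simp
    rw [hpad, Finset.sum_range_succ']
    congr 1
    · refine Finset.sum_congr rfl fun m _ => ?_
      have e1 : (N:ℤ) + (p+1) - (((m:ℕ)+1:ℕ):ℤ) = (N:ℤ) + p - (m:ℤ) := by push_cast; ring
      have e2 : q + (((m:ℕ)+1:ℕ):ℤ) = (q+1) + (m:ℤ) := by push_cast; ring
      have e3 : (((m:ℕ)+1:ℕ):ℂ) - ((p+1:ℤ):ℂ) - 1 = (m:ℂ) - (p:ℂ) - 1 := by push_cast; ring
      rw [e1, e2, e3]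
    · have e1 : (N:ℤ) + (p+1) - ((0:ℕ):ℤ) = ((N+1:ℕ):ℤ) + p - ((0:ℕ):ℤ) := by push_cast; ring
      rw [genBinom_zero, genBinom_zero, e1]
  rw [h1]
  abel
end V

end Aux
section Mono
variable {V : Type*} [AddCommGroup V] [Module ℂ V]

lemma nassoc_range (μ : ℤ → V →ₗ[ℂ] V →ₗ[ℂ] V) (a b c : V) (N : ℕ)
    (h : NAssocId (fun n (x y : V) => μ n x y) (fun n x y => μ n x y)
        (fun n x y => μ n x y) (fun n x y => μ n x y) N a b c)
    (p q : ℤ) (M : ℕ) (hM : ∀ m : ℕ, M ≤ m → μ (q + (m:ℤ)) b c = 0) :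
    ∑ i ∈ Finset.range (N+1), (N.choose i : ℂ) • μ (q + (N:ℤ) - (i:ℤ)) (μ (p + (i:ℤ)) a b) c
      = ∑ m ∈ Finset.range M,
          genBinom ((m:ℂ) - (p:ℂ) - 1) m • μ ((N:ℤ) + p - (m:ℤ)) a (μ (q + (m:ℤ)) b c) := by
  have hh := h p q
  simp only [] at hh
  rw [hh]
  exact finsum_range _ M (fun m hm => by rw [hM m hm]; simp)

lemma nassoc_mono (μ : ℤ → V →ₗ[ℂ] V →ₗ[ℂ] V) (a b c : V) (N : ℕ)
    (hbc : ∃ T : ℤ, ∀ n ≥ T, μ n b c = 0)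
    (h : NAssocId (fun n (x y : V) => μ n x y) (fun n x y => μ n x y)
        (fun n x y => μ n x y) (fun n x y => μ n x y) N a b c) :
    NAssocId (fun n (x y : V) => μ n x y) (fun n x y => μ n x y)
        (fun n x y => μ n x y) (fun n x y => μ n x y) (N+1) a b c := by
  obtain ⟨T, hT⟩ := hbc
  intro p q
  simp only []
  set M : ℕ := (T - q).toNat with hMdef
  have hMq : ∀ m : ℕ, M ≤ m → μ (q + (m:ℤ)) b c = 0 := by
    intro m hm; apply hT; omega
  have hMq1 : ∀ m : ℕ, M ≤ m → μ ((q+1) + (m:ℤ)) b c = 0 := by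
    intro m hm; apply hT; omega
  have E1 := nassoc_range μ a b c N h (p+1) q M hMq
  have E2 := nassoc_range μ a b c N h p (q+1) M hMq1
  have PS := pascal_sum (fun m n => μ n (μ m a b) c) N p q
  rw [finsum_range _ (M+1) (fun m hm => by
        rw [hMq m (by omega)]; simp)]
  rw [PS, E1, E2]
  have PR := pascal_rhs (fun k l => μ k a (μ l b c)) N p q M
      (fun k => by show μ k a (μ (q+(M:ℤ)) b c) = 0; rw [hMq M le_rfl]; simp)
  exact PR

lemma nassoc_monoLE (μ : ℤ → V →ₗ[ℂ] V →ₗ[ℂ] V) (a b c : V) {N N' : ℕ} (hNN : N ≤ N')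
    (hbc : ∃ T : ℤ, ∀ n ≥ T, μ n b c = 0)
    (h : NAssocId (fun n (x y : V) => μ n x y) (fun n x y => μ n x y)
        (fun n x y => μ n x y) (fun n x y => μ n x y) N a b c) :
    NAssocId (fun n (x y : V) => μ n x y) (fun n x y => μ n x y)
        (fun n x y => μ n x y) (fun n x y => μ n x y) N' a b c := by
  induction N' with
  | zero => exact Nat.le_zero.mp hNN ▸ h
  | succ k ih =>
    rcases Nat.lt_or_ge N (k+1) with hlt | hge
    · exact nassoc_mono μ a b c k hbc (ih (Nat.lt_succ_iff.mp hlt))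
    · exact Nat.le_antisymm hNN hge ▸ h
end Mono

lemma split4_of_parts {V : Type*} [AddCommGroup V] [Module ℂ V] {ι : Type*}
    (s : Finset ι) (co : ι → ℂ) (lam : ℂ) (F : ι → V) (f g h k : ι → V)
    (hF : ∀ i ∈ s, F i = co i • f i + lam • (co i • g i) + lam • (co i • h i)
        + lam • lam • (co i • k i)) :
    ∑ i ∈ s, F i = (∑ i ∈ s, co i • f i) + lam • (∑ i ∈ s, co i • g i)
        + lam • (∑ i ∈ s, co i • h i) + lam • lam • (∑ i ∈ s, co i • k i) := by
  rw [Finset.sum_congr rfl hF]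
  simp only [Finset.sum_add_distrib, ← Finset.smul_sum]

/-- An ordinary Rota-Baxter operator of weight `lam` gives a dendriform field
algebra in component form, with `a ≺ₙ b = aₙ(Pb) + lam·aₙb` and `a ≻ₙ b = (Pa)ₙb`. -/
theorem stmt16 {V : Type*} [AddCommGroup V] [Module ℂ V]
    (μ : ℤ → V →ₗ[ℂ] V →ₗ[ℂ] V)
    (htr : Truncation (fun n (a b : V) => μ n a b))
    (hwa : WeakAssoc (fun n (a b : V) => μ n a b))
    (lam : ℂ) (P : V →ₗ[ℂ] V) (hP : OrdRBO μ P lam) :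
    let prec : ℤ → V → V → V := fun n a b => μ n a (P b) + lam • μ n a b
    let succ : ℤ → V → V → V := fun n a b => μ n (P a) b
    let sum : ℤ → V → V → V := fun n a b => prec n a b + succ n a b
    ∀ a c : V, ∃ N : ℕ, ∀ b : V,
      NAssocId prec prec prec sum N a b c ∧
      NAssocId succ prec succ prec N a b c ∧
      NAssocId sum succ succ succ N a b c := by
  have hsum : ∀ (x y : V) (n : ℤ), P ((μ n x (P y) + lam • μ n x y) + μ n (P x) y)
      = μ n (P x) (P y) := by
    intro x y n
    rw [map_add, map_add, map_smul, hP]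
    abel
  show ∀ a c : V, ∃ N : ℕ, ∀ b : V,
      NAssocId (fun n a b => μ n a (P b) + lam • μ n a b)
        (fun n a b => μ n a (P b) + lam • μ n a b)
        (fun n a b => μ n a (P b) + lam • μ n a b)
        (fun n a b => (μ n a (P b) + lam • μ n a b) + μ n (P a) b) N a b c ∧
      NAssocId (fun n a b => μ n (P a) b)
        (fun n a b => μ n a (P b) + lam • μ n a b)
        (fun n a b => μ n (P a) b)
        (fun n a b => μ n a (P b) + lam • μ n a b) N a b c ∧
      NAssocId (fun n a b => (μ n a (P b) + lam • μ n a b) + μ n (P a) b)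
        (fun n a b => μ n (P a) b)
        (fun n a b => μ n (P a) b)
        (fun n a b => μ n (P a) b) N a b c
  intro a c
  obtain ⟨N1, h1⟩ := hwa a c
  obtain ⟨N2, h2⟩ := hwa a (P c)
  obtain ⟨N3, h3⟩ := hwa (P a) c
  obtain ⟨N4, h4⟩ := hwa (P a) (P c)
  refine ⟨(N1.max N2).max (N3.max N4), fun b => ?_⟩
  set N := (N1.max N2).max (N3.max N4) with hN
  have H1 : ∀ b' : V, NAssocId (fun n (x y : V) => μ n x y) (fun n x y => μ n x y)
      (fun n x y => μ n x y) (fun n x y => μ n x y) N a b' c :=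
    fun b' => nassoc_monoLE μ a b' c ((Nat.le_max_left N1 N2).trans (Nat.le_max_left _ _)) (htr b' c) (h1 b')
  have H2 : ∀ b' : V, NAssocId (fun n (x y : V) => μ n x y) (fun n x y => μ n x y)
      (fun n x y => μ n x y) (fun n x y => μ n x y) N a b' (P c) :=
    fun b' => nassoc_monoLE μ a b' (P c) ((Nat.le_max_right N1 N2).trans (Nat.le_max_left _ _)) (htr b' (P c)) (h2 b')
  have H3 : ∀ b' : V, NAssocId (fun n (x y : V) => μ n x y) (fun n x y => μ n x y)
      (fun n x y => μ n x y) (fun n x y => μ n x y) N (P a) b' c :=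
    fun b' => nassoc_monoLE μ (P a) b' c ((Nat.le_max_left N3 N4).trans (Nat.le_max_right _ _)) (htr b' c) (h3 b')
  have H4 : ∀ b' : V, NAssocId (fun n (x y : V) => μ n x y) (fun n x y => μ n x y)
      (fun n x y => μ n x y) (fun n x y => μ n x y) N (P a) b' (P c) :=
    fun b' => nassoc_monoLE μ (P a) b' (P c) ((Nat.le_max_right N3 N4).trans (Nat.le_max_right _ _)) (htr b' (P c)) (h4 b')
  refine ⟨?_, ?_, ?_⟩
  · -- goal 1 : prec prec ; prec sum
    intro p q
    simp only []
    obtain ⟨T1, hT1⟩ := htr b c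
    obtain ⟨T2, hT2⟩ := htr b (P c)
    obtain ⟨T3, hT3⟩ := htr (P b) c
    obtain ⟨T4, hT4⟩ := htr (P b) (P c)
    set T0 : ℤ := max (max T1 T2) (max T3 T4) with hT0
    have h01 : T1 ≤ T0 := le_trans (le_max_left _ _) (le_max_left _ _)
    have h02 : T2 ≤ T0 := le_trans (le_max_right _ _) (le_max_left _ _)
    have h03 : T3 ≤ T0 := le_trans (le_max_left _ _) (le_max_right _ _)
    have h04 : T4 ≤ T0 := le_trans (le_max_right _ _) (le_max_right _ _)
    set M : ℕ := (T0 - q).toNat with hM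
    have hbc : ∀ m : ℕ, M ≤ m → μ (q + (m:ℤ)) b c = 0 := fun m hm => hT1 _ (by omega)
    have hbPc : ∀ m : ℕ, M ≤ m → μ (q + (m:ℤ)) b (P c) = 0 := fun m hm => hT2 _ (by omega)
    have hPbc : ∀ m : ℕ, M ≤ m → μ (q + (m:ℤ)) (P b) c = 0 := fun m hm => hT3 _ (by omega)
    have hPbPc : ∀ m : ℕ, M ≤ m → μ (q + (m:ℤ)) (P b) (P c) = 0 := fun m hm => hT4 _ (by omega)
    have FR := finsum_range (fun m : ℕ => genBinom ((m:ℂ) - (p:ℂ) - 1) m •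
        (μ ((N:ℤ) + p - (m:ℤ)) a
            (P ((μ (q + (m:ℤ)) b (P c) + lam • μ (q + (m:ℤ)) b c) + μ (q + (m:ℤ)) (P b) c))
          + lam • μ ((N:ℤ) + p - (m:ℤ)) a
            ((μ (q + (m:ℤ)) b (P c) + lam • μ (q + (m:ℤ)) b c) + μ (q + (m:ℤ)) (P b) c))) M
        (fun m hm => by
          rw [hbc m hm, hbPc m hm, hPbc m hm]
          simp)
    rw [FR]
    simp only [hsum]
    have EA1 := nassoc_range μ a (P b) (P c) N (H2 (P b)) p q M hPbPc
    have EA2 := nassoc_range μ a b (P c) N (H2 b) p q M hbPc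
    have EA3 := nassoc_range μ a (P b) c N (H1 (P b)) p q M hPbc
    have EA4 := nassoc_range μ a b c N (H1 b) p q M hbc
    trans ((∑ i ∈ Finset.range (N+1), ((N.choose i : ℕ) : ℂ) •
            μ (q + (N:ℤ) - (i:ℤ)) (μ (p + (i:ℤ)) a (P b)) (P c))
        + lam • (∑ i ∈ Finset.range (N+1), ((N.choose i : ℕ) : ℂ) •
            μ (q + (N:ℤ) - (i:ℤ)) (μ (p + (i:ℤ)) a b) (P c))
        + lam • (∑ i ∈ Finset.range (N+1), ((N.choose i : ℕ) : ℂ) •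
            μ (q + (N:ℤ) - (i:ℤ)) (μ (p + (i:ℤ)) a (P b)) c)
        + lam • lam • (∑ i ∈ Finset.range (N+1), ((N.choose i : ℕ) : ℂ) •
            μ (q + (N:ℤ) - (i:ℤ)) (μ (p + (i:ℤ)) a b) c))
    · refine split4_of_parts _ _ _ _ _ _ _ _ (fun i _ => ?_)
      simp only [map_add, map_smul, LinearMap.add_apply, LinearMap.smul_apply, smul_add]
      module
    · rw [EA1, EA2, EA3, EA4]
      refine (split4_of_parts _ _ _ _ _ _ _ _ (fun m _ => ?_)).symm
      simp only [map_add, map_smul, LinearMap.add_apply, LinearMap.smul_apply, smul_add]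
      module
  · -- goal 2 : succ prec ; succ prec
    intro p q
    simp only []
    obtain ⟨T1, hT1⟩ := htr b c
    obtain ⟨T2, hT2⟩ := htr b (P c)
    set T0 : ℤ := max T1 T2 with hT0
    have h01 : T1 ≤ T0 := le_max_left _ _
    have h02 : T2 ≤ T0 := le_max_right _ _
    set M : ℕ := (T0 - q).toNat with hM
    have hbc : ∀ m : ℕ, M ≤ m → μ (q + (m:ℤ)) b c = 0 := fun m hm => hT1 _ (by omega)
    have hbPc : ∀ m : ℕ, M ≤ m → μ (q + (m:ℤ)) b (P c) = 0 := fun m hm => hT2 _ (by omega)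
    have FR := finsum_range (fun m : ℕ => genBinom ((m:ℂ) - (p:ℂ) - 1) m •
        μ ((N:ℤ) + p - (m:ℤ)) (P a) (μ (q + (m:ℤ)) b (P c) + lam • μ (q + (m:ℤ)) b c)) M
        (fun m hm => by rw [hbc m hm, hbPc m hm]; simp)
    rw [FR]
    have EA4 := nassoc_range μ (P a) b (P c) N (H4 b) p q M hbPc
    have EA3 := nassoc_range μ (P a) b c N (H3 b) p q M hbc
    calc ∑ i ∈ Finset.range (N+1), ((N.choose i : ℕ) : ℂ) •
            (μ (q + (N:ℤ) - (i:ℤ)) (μ (p + (i:ℤ)) (P a) b) (P c)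
              + lam • μ (q + (N:ℤ) - (i:ℤ)) (μ (p + (i:ℤ)) (P a) b) c)
        = (∑ i ∈ Finset.range (N+1), ((N.choose i : ℕ) : ℂ) •
              μ (q + (N:ℤ) - (i:ℤ)) (μ (p + (i:ℤ)) (P a) b) (P c))
          + lam • ∑ i ∈ Finset.range (N+1), ((N.choose i : ℕ) : ℂ) •
              μ (q + (N:ℤ) - (i:ℤ)) (μ (p + (i:ℤ)) (P a) b) c := by
          rw [sum_split2]
      _ = (∑ m ∈ Finset.range M, genBinom ((m:ℂ) - (p:ℂ) - 1) m •
              μ ((N:ℤ) + p - (m:ℤ)) (P a) (μ (q + (m:ℤ)) b (P c)))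
          + lam • ∑ m ∈ Finset.range M, genBinom ((m:ℂ) - (p:ℂ) - 1) m •
              μ ((N:ℤ) + p - (m:ℤ)) (P a) (μ (q + (m:ℤ)) b c) := by
          rw [EA4, EA3]
      _ = ∑ m ∈ Finset.range M, genBinom ((m:ℂ) - (p:ℂ) - 1) m •
            μ ((N:ℤ) + p - (m:ℤ)) (P a) (μ (q + (m:ℤ)) b (P c) + lam • μ (q + (m:ℤ)) b c) := by
          simp only [map_add, map_smul]
          rw [sum_split2]
  · -- goal 3 : sum succ ; succ succ
    intro p q
    have H := H3 (P b) p q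
    simp only [] at H ⊢
    simp only [hsum]
    exact H
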